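/- Let l ≥ 1 be an integer and r ≥ 0 an integer. Let Ω ⊆ ℝ² with coordinates (B,D) be the set defined by the inequalities B^l ≤ 2D^r and D ≥ B ≥ 1. Define L(B,D) = lB − rD − (l+1). Then L(B,D) ≤ 0 for every (B,D) ∈ Ω. Moreover, if (B,D) ∈ Ω and L(B,D) = 0, then l = 1, r = 0, and B = 2. -/

import Mathlib

/-- AM-GM step: for `r < l` and `D ≥ 1`, `2 * D ^ r ≤ ((r*D + l + 1 - r)/l) ^ l`. -/
lemma amgm_step (l r : ℕ) (hr : r < l) (D : ℝ) (hD : 1 ≤ D) :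
    2 * D ^ r ≤ (((r : ℝ) * D + (l : ℝ) + 1 - (r : ℝ)) / l) ^ l := by
  have hlpos : 0 < l := by omega
  have hl0 : (0 : ℝ) < l := by exact_mod_cast hlpos
  have hD0 : (0 : ℝ) ≤ D := by linarith
  have hrl : (r : ℝ) ≤ (l : ℝ) - 1 := by
    have : (r : ℝ) + 1 ≤ (l : ℝ) := by exact_mod_cast hr
    linarith
  have key := Real.geom_mean_le_arith_mean3_weighted
    (w₁ := 1 / l) (w₂ := (r : ℝ) / l) (w₃ := ((l : ℝ) - 1 - r) / l)
    (p₁ := 2) (p₂ := D) (p₃ := 1)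
    (by positivity) (by positivity)
    (by apply div_nonneg; linarith; linarith)
    (by norm_num) hD0 (by norm_num)
    (by field_simp; ring)
  have h1 : (1 : ℝ) ^ (((l : ℝ) - 1 - r) / l) = 1 := Real.one_rpow _
  rw [h1, mul_one] at key
  have hLnn : (0 : ℝ) ≤ (2 : ℝ) ^ ((1 : ℝ) / l) * D ^ ((r : ℝ) / l) := by positivity
  have key2 := Real.rpow_le_rpow hLnn key (le_of_lt hl0)
  simp only [Real.rpow_natCast] at key2
  have hL : ((2 : ℝ) ^ ((1 : ℝ) / l) * D ^ ((r : ℝ) / l)) ^ l = 2 * D ^ r := by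
    rw [← Real.rpow_natCast ((2:ℝ) ^ ((1:ℝ)/l) * D ^ ((r:ℝ)/l)) l,
      Real.mul_rpow (by positivity) (by positivity),
      ← Real.rpow_mul (by norm_num : (0:ℝ) ≤ 2), ← Real.rpow_mul hD0,
      one_div, inv_mul_cancel₀ hl0.ne', div_mul_cancel₀ _ hl0.ne',
      Real.rpow_one, Real.rpow_natCast]
  have hRbase : 1 / (l:ℝ) * 2 + (r : ℝ) / l * D + ((l : ℝ) - 1 - r) / l * 1
      = ((r : ℝ) * D + (l : ℝ) + 1 - (r : ℝ)) / l := by field_simp; ring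
  calc 2 * D ^ r = ((2 : ℝ) ^ ((1 : ℝ) / l) * D ^ ((r : ℝ) / l)) ^ l := hL.symm
    _ ≤ (1 / (l:ℝ) * 2 + (r : ℝ) / l * D + ((l : ℝ) - 1 - r) / l * 1) ^ l := key2
    _ = _ := by rw [hRbase]

/-- For integers `l ≥ 1`, `r ≥ 0` and reals `(B, D)` with
`B^l ≤ 2 D^r` and `D ≥ B ≥ 1`, the function `L(B,D) = lB − rD − (l+1)` is
non-positive; moreover, if `L(B,D) = 0` then `l = 1`, `r = 0` and `B = 2`. -/
theorem stmt_1 (l r : ℕ) (hl : 1 ≤ l) (B D : ℝ)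
    (h1 : B ^ l ≤ 2 * D ^ r) (h2 : 1 ≤ B) (h3 : B ≤ D) :
    (l : ℝ) * B - (r : ℝ) * D - ((l : ℝ) + 1) ≤ 0 ∧
      ((l : ℝ) * B - (r : ℝ) * D - ((l : ℝ) + 1) = 0 → l = 1 ∧ r = 0 ∧ B = 2) := by
  have hl0 : (0 : ℝ) < l := by exact_mod_cast hl
  have hD : (1 : ℝ) ≤ D := le_trans h2 h3
  rcases lt_or_ge r l with hrl | hlr
  · -- r < l : AM-GM route, get expr ≤ -r
    have hk := amgm_step l r hrl D hD
    have hBl : B ^ l ≤ (((r : ℝ) * D + (l : ℝ) + 1 - (r : ℝ)) / l) ^ l := le_trans h1 hk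
    have hrnn : (0 : ℝ) ≤ (r : ℝ) := Nat.cast_nonneg r
    have hcnn : (0 : ℝ) ≤ ((r : ℝ) * D + (l : ℝ) + 1 - (r : ℝ)) / l := by
      apply div_nonneg _ (le_of_lt hl0)
      nlinarith
    have hB0 : (0 : ℝ) ≤ B := by linarith
    have hBc : B ≤ ((r : ℝ) * D + (l : ℝ) + 1 - (r : ℝ)) / l :=
      (pow_le_pow_iff_left₀ hB0 hcnn (by omega)).mp hBl
    have hmain : (l : ℝ) * B ≤ (r : ℝ) * D + (l : ℝ) + 1 - (r : ℝ) := by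
      have := mul_le_mul_of_nonneg_left hBc (le_of_lt hl0)
      rwa [mul_div_cancel₀ _ (ne_of_gt hl0)] at this
    constructor
    · linarith
    · intro heq
      have hrz : (r : ℝ) = 0 := by linarith
      have hr0' : r = 0 := by exact_mod_cast hrz
      subst hr0'
      have hB : B = ((l : ℝ) + 1) / l := by
        field_simp
        push_cast at heq ⊢
        linarith
      have hBl2 : B ^ l ≤ 2 := by simpa using h1
      rcases eq_or_lt_of_le hl with h1l | h2l
      · have hl1 : l = 1 := h1l.symm
        subst hl1
        refine ⟨rfl, rfl, ?_⟩
        norm_num at hB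
        linarith
      · -- l ≥ 2: contradiction via strict Bernoulli
        exfalso
        have h2l' : 2 ≤ l := h2l
        have ha : (0 : ℝ) < 1 / l := by positivity
        have ha2 : 1 / (l:ℝ) ≤ 1 / 2 := by
          apply div_le_div_of_nonneg_left (by norm_num) (by norm_num)
          exact_mod_cast h2l'
        have hber := one_add_mul_le_pow (a := (1 : ℝ) / l) (by nlinarith) (l - 2)
        have hcast : ((l - 2 : ℕ) : ℝ) = (l : ℝ) - 2 := by
          push_cast [Nat.cast_sub h2l']; ring
        rw [hcast] at hber
        have hsq : (0:ℝ) ≤ (1 + 1/(l:ℝ))^2 := sq_nonneg _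
        have hmul := mul_le_mul_of_nonneg_left hber hsq
        have hsplit : (1 + 1 / (l:ℝ)) ^ l = (1 + 1/(l:ℝ))^2 * (1 + 1/(l:ℝ)) ^ (l - 2) := by
          rw [← pow_add]; congr 1; omega
        have hprod : (1 + 1/(l:ℝ))^2 * (1 + ((l:ℝ) - 2) * (1/l))
            = 2 + 2*(1/(l:ℝ)) - 2*(1/(l:ℝ))^2 - 2*(1/(l:ℝ))^3 := by
          field_simp; ring
        have hBval : B = 1 + 1 / (l : ℝ) := by rw [hB]; field_simp
        have ha3 : 1/(l:ℝ) - (1/(l:ℝ))^2 - (1/(l:ℝ))^3 > 0 := by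
          nlinarith [mul_le_mul_of_nonneg_left ha2 ha.le,
            mul_pos ha ha, mul_pos (mul_pos ha ha) ha]
        have hgt : 2 < (1 + 1 / (l:ℝ)) ^ l := by
          rw [hsplit]
          calc (2:ℝ) < (1 + 1/(l:ℝ))^2 * (1 + ((l:ℝ) - 2) * (1/l)) := by
                rw [hprod]; linarith
            _ ≤ _ := hmul
        rw [hBval] at hBl2
        linarith
  · -- r ≥ l : expression is strictly negative
    have hlr' : (l : ℝ) ≤ (r : ℝ) := by exact_mod_cast hlr
    have : (l : ℝ) * B - (r : ℝ) * D - ((l : ℝ) + 1) < 0 := by nlinarith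
    exact ⟨le_of_lt this, fun h => absurd h (ne_of_lt this)⟩
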